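/- Maximal inequality for sparse restrictions of a Gaussian vector: for all integers 1 ≤ k ≤ d and ξ ∼ N(0, I_d), E[ max_{S ⊆ {1,…,d}, |S| ≤ k} Σ_{i ∈ S} ξ_i² ] ≤ 6·k·log(e·d/k). -/

import Mathlib

open MeasureTheory ProbabilityTheory Real Filter Pointwise
open scoped ENNReal NNReal

noncomputable section

/-- The standard Gaussian measure `N(0, I_d)` on `ℝ^d`. -/
def stdGaussian (d : ℕ) : Measure (Fin d → ℝ) :=
  Measure.pi fun _ => gaussianReal 0 1

/-- Squared Euclidean distance on `ℝ^d`. -/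
def sqDist {d : ℕ} (x y : Fin d → ℝ) : ℝ := ∑ i, (x i - y i) ^ 2

/-- The ℓp (quasi)norm, for `0 < p < ∞`. -/
def pNorm {d : ℕ} (p : ℝ) (x : Fin d → ℝ) : ℝ := (∑ i, |x i| ^ p) ^ (1 / p)

/-- The unit ℓp ball in `ℝ^d`. -/
def lpBall (d : ℕ) (p : ℝ) : Set (Fin d → ℝ) := {x | pNorm p x ≤ 1}

/-- `proj` is a Euclidean projection onto `Θ`: it takes values in `Θ` and
minimizes the Euclidean distance to `Θ`. -/
def IsProjOn {d : ℕ} (Θ : Set (Fin d → ℝ)) (proj : (Fin d → ℝ) → Fin d → ℝ) : Prop :=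
  ∀ y, proj y ∈ Θ ∧ ∀ ϑ ∈ Θ, sqDist y (proj y) ≤ sqDist y ϑ

/-- The risk `E‖θhat(θ + σξ) − θ‖₂²` of an estimator at `θ`. -/
def risk {d : ℕ} (θhat : (Fin d → ℝ) → Fin d → ℝ) (σ : ℝ) (θ : Fin d → ℝ) : ℝ≥0∞ :=
  ∫⁻ ξ, ENNReal.ofReal (sqDist (θhat (θ + σ • ξ)) θ) ∂(stdGaussian d)

/-- Worst-case (supremum) risk of an estimator over `Θ`. -/
def supRisk {d : ℕ} (Θ : Set (Fin d → ℝ)) (θhat : (Fin d → ℝ) → Fin d → ℝ) (σ : ℝ) : ℝ≥0∞ :=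
  ⨆ θ ∈ Θ, risk θhat σ θ

/-- Minimax risk over `Θ`: infimum over measurable estimators of the worst-case risk. -/
def minimax {d : ℕ} (Θ : Set (Fin d → ℝ)) (σ : ℝ) : ℝ≥0∞ :=
  ⨅ θhat ∈ {f : (Fin d → ℝ) → Fin d → ℝ | Measurable f}, supRisk Θ θhat σ

lemma pdf_smul (x : ℝ) : (gaussianPDFReal 0 1 x) • Real.exp (x^2/4)
    = (Real.sqrt (2*π))⁻¹ * Real.exp (-(1/4) * x^2) := by
  simp only [gaussianPDFReal, smul_eq_mul, NNReal.coe_one, mul_one, sub_zero]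
  rw [mul_assoc, ← Real.exp_add]
  ring_nf

lemma integrand_integrable :
    Integrable (fun x => (gaussianPDFReal 0 1 x) • Real.exp (x^2/4)) := by
  simp only [pdf_smul]
  exact (integrable_exp_neg_mul_sq (by norm_num : (0:ℝ) < 1/4)).const_mul _

lemma int_aux : ∫ x, (gaussianPDFReal 0 1 x) • Real.exp (x^2/4) = Real.sqrt 2 := by
  simp only [pdf_smul]
  rw [integral_const_mul, integral_gaussian]
  rw [← Real.sqrt_inv, ← Real.sqrt_mul (by positivity)]
  rw [show ((2*π)⁻¹ * (π / (1/4))) = 2 by field_simp; ring]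

lemma gauss_mgf : ∫ x, Real.exp (x^2/4) ∂(gaussianReal 0 1) = Real.sqrt 2 := by
  rw [gaussianReal_of_var_ne_zero 0 one_ne_zero]
  rw [show gaussianPDF 0 1 = fun x => ((gaussianPDFReal 0 1 x).toNNReal : ℝ≥0∞) from rfl]
  rw [integral_withDensity_eq_integral_smul (measurable_gaussianPDFReal 0 1).real_toNNReal]
  simp_rw [NNReal.smul_def, Real.coe_toNNReal _ (gaussianPDFReal_nonneg 0 1 _)]
  exact int_aux

lemma gauss_mgf_integrable : Integrable (fun x => Real.exp (x^2/4)) (gaussianReal 0 1) := by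
  rw [gaussianReal_of_var_ne_zero 0 one_ne_zero]
  rw [show gaussianPDF 0 1 = fun x => ((gaussianPDFReal 0 1 x).toNNReal : ℝ≥0∞) from rfl]
  rw [integrable_withDensity_iff_integrable_smul (measurable_gaussianPDFReal 0 1).real_toNNReal]
  simp_rw [NNReal.smul_def, Real.coe_toNNReal _ (gaussianPDFReal_nonneg 0 1 _)]
  exact integrand_integrable

lemma pi_integrable_prod {E : Type*} [MeasurableSpace E] (m : Measure E) [SigmaFinite m]
    {ι : Type*} [Fintype ι] (f : ι → E → ℝ) (hf : ∀ i, Integrable (f i) m) :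
    Integrable (fun x : ι → E => ∏ i, f i (x i)) (Measure.pi fun _ => m) := by
  letI : MeasureSpace E := ⟨m⟩
  exact Integrable.fintype_prod hf

lemma pi_integral_prod {E : Type*} [MeasurableSpace E] (m : Measure E) [SigmaFinite m]
    {ι : Type*} [Fintype ι] (f : ι → E → ℝ) :
    ∫ x : ι → E, ∏ i, f i (x i) ∂(Measure.pi fun _ => m) = ∏ i, ∫ x, f i x ∂m := by
  letI : MeasureSpace E := ⟨m⟩
  exact integral_fintype_prod_eq_prod (fun i => f i)

lemma subset_integrable (d : ℕ) (S : Finset (Fin d)) :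
    Integrable (fun ξ : Fin d → ℝ => ∏ i ∈ S, Real.exp (ξ i ^ 2 / 4))
      (Measure.pi fun _ => gaussianReal 0 1) := by
  have h := pi_integrable_prod (gaussianReal 0 1)
    (fun (i : Fin d) (x : ℝ) => if i ∈ S then Real.exp (x ^ 2 / 4) else 1)
    (fun i => by by_cases h : i ∈ S <;> simp [h, gauss_mgf_integrable])
  refine h.congr (ae_of_all _ fun ξ => ?_)
  simp only [Finset.prod_ite_mem, Finset.univ_inter]

lemma subset_integral (d : ℕ) (S : Finset (Fin d)) :
    ∫ ξ, ∏ i ∈ S, Real.exp (ξ i ^ 2 / 4) ∂(Measure.pi fun _ => gaussianReal 0 1)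
      = Real.sqrt 2 ^ S.card := by
  have h := pi_integral_prod (gaussianReal 0 1)
    (fun (i : Fin d) (x : ℝ) => if i ∈ S then Real.exp (x ^ 2 / 4) else 1)
  have heq : ∀ ξ : Fin d → ℝ, (∏ i, if i ∈ S then Real.exp (ξ i ^ 2 / 4) else 1)
      = ∏ i ∈ S, Real.exp (ξ i ^ 2 / 4) := by
    intro ξ; simp only [Finset.prod_ite_mem, Finset.univ_inter]
  simp only [heq] at h
  rw [h]
  have : ∀ i : Fin d, (∫ x, (if i ∈ S then Real.exp (x ^ 2 / 4) else 1) ∂(gaussianReal 0 1))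
      = if i ∈ S then Real.sqrt 2 else 1 := by
    intro i
    by_cases hi : i ∈ S <;> simp [hi, gauss_mgf]
  simp only [this, Finset.prod_ite_mem, Finset.univ_inter, Finset.prod_const]

lemma card_bound (d k : ℕ) (hk1 : 1 ≤ k) (hkd : k ≤ d) :
    ((Finset.univ.filter (fun S : Finset (Fin d) => S.card ≤ k)).card : ℝ)
      ≤ (Real.exp 1 * d / k) ^ k := by
  have hd1 : 1 ≤ d := hk1.trans hkd
  have hd0 : (0:ℝ) < d := by exact_mod_cast hd1
  have hk0 : (0:ℝ) < k := by exact_mod_cast hk1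
  set x : ℝ := (k : ℝ) / d with hx
  have hx0 : 0 < x := by positivity
  have hx1 : x ≤ 1 := by rw [hx, div_le_one hd0]; exact_mod_cast hkd
  -- N ≤ ∑_{j ≤ k} C(d, j)
  have hN : (Finset.univ.filter (fun S : Finset (Fin d) => S.card ≤ k)).card
      ≤ ∑ j ∈ Finset.range (k+1), d.choose j := by
    have hsub : Finset.univ.filter (fun S : Finset (Fin d) => S.card ≤ k)
        ⊆ (Finset.range (k+1)).biUnion (fun j => Finset.powersetCard j Finset.univ) := by
      intro S hS
      simp only [Finset.mem_filter, Finset.mem_univ, true_and] at hS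
      refine Finset.mem_biUnion.2 ⟨S.card, Finset.mem_range.2 (Nat.lt_succ_of_le hS), ?_⟩
      exact Finset.mem_powersetCard.2 ⟨Finset.subset_univ S, rfl⟩
    calc _ ≤ _ := Finset.card_le_card hsub
      _ ≤ ∑ j ∈ Finset.range (k+1), (Finset.powersetCard j (Finset.univ : Finset (Fin d))).card :=
        Finset.card_biUnion_le
      _ = ∑ j ∈ Finset.range (k+1), d.choose j := by
        simp [Finset.card_powersetCard]
  -- real bound
  have key : ((Finset.univ.filter (fun S : Finset (Fin d) => S.card ≤ k)).card : ℝ) * x ^ k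
      ≤ Real.exp k := by
    calc ((Finset.univ.filter (fun S : Finset (Fin d) => S.card ≤ k)).card : ℝ) * x ^ k
        ≤ (∑ j ∈ Finset.range (k+1), (d.choose j : ℝ)) * x ^ k := by
          gcongr
          exact_mod_cast hN
      _ = ∑ j ∈ Finset.range (k+1), (d.choose j : ℝ) * x ^ k := by rw [Finset.sum_mul]
      _ ≤ ∑ j ∈ Finset.range (k+1), (d.choose j : ℝ) * x ^ j := by
          refine Finset.sum_le_sum fun j hj => ?_
          have : x ^ k ≤ x ^ j :=
            pow_le_pow_of_le_one hx0.le hx1 (Nat.lt_succ_iff.1 (Finset.mem_range.1 hj))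
          gcongr
      _ ≤ ∑ j ∈ Finset.range (d+1), (d.choose j : ℝ) * x ^ j := by
          refine Finset.sum_le_sum_of_subset_of_nonneg
            (Finset.range_subset_range.2 (by omega)) fun j _ _ => by positivity
      _ = (1 + x) ^ d := by
          rw [add_comm (1:ℝ) x, add_pow]
          refine (Finset.sum_congr rfl fun j _ => ?_).symm
          rw [one_pow]; ring
      _ ≤ Real.exp x ^ d := by
          have h1 : (1:ℝ) + x ≤ Real.exp x := by linarith [Real.add_one_le_exp x]
          exact pow_le_pow_left₀ (by positivity) h1 d
      _ = Real.exp k := by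
          rw [← Real.exp_nat_mul]; congr 1; rw [hx]; field_simp
  have hxk : 0 < x ^ k := by positivity
  rw [← le_div_iff₀ hxk] at key
  refine key.trans_eq ?_
  have hrhs : (Real.exp 1 * d / k) ^ k = Real.exp k * ((d:ℝ) ^ k / (k:ℝ) ^ k) := by
    rw [div_pow, mul_pow, ← Real.exp_nat_mul, mul_one, mul_div_assoc]
  rw [hrhs, hx, div_pow]
  field_simp

instance (d : ℕ) : IsProbabilityMeasure (stdGaussian d) := by
  unfold _root_.stdGaussian; infer_instance


/-- Maximal inequality for sparse restrictions of a Gaussian vector: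
for `1 ≤ k ≤ d` and `ξ ∼ N(0, I_d)`,
`E[max_{S ⊆ [d], |S| ≤ k} Σ_{i ∈ S} ξᵢ²] ≤ 6·k·log(e·d/k)`. -/
theorem gaussian_sparse_maximal_inequality (d k : ℕ) (hk1 : 1 ≤ k) (hkd : k ≤ d) :
    ∫ ξ, (⨆ S ∈ {S : Finset (Fin d) | S.card ≤ k}, ∑ i ∈ S, ξ i ^ 2) ∂(stdGaussian d)
      ≤ 6 * k * Real.log (Real.exp 1 * d / k) := by
  classical
  have hk0 : (0:ℝ) < k := by exact_mod_cast hk1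
  have hd0 : (0:ℝ) < d := lt_of_lt_of_le hk0 (by exact_mod_cast hkd)
  have hq_pos : (0:ℝ) < Real.exp 1 * d / k := by
    exact div_pos (mul_pos (Real.exp_pos 1) hd0) hk0
  set T : Finset (Finset (Fin d)) := Finset.univ.filter (fun S => S.card ≤ k) with hTdef
  have hT : T.Nonempty := ⟨∅, by simp [hTdef, Nat.zero_le]⟩
  set M : (Fin d → ℝ) → ℝ := fun ξ => T.sup' hT (fun S => ∑ i ∈ S, ξ i ^ 2) with hMdef
  -- identify the iSup with the finset sup'
  have hM : ∀ ξ : Fin d → ℝ,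
      (⨆ S ∈ {S : Finset (Fin d) | S.card ≤ k}, ∑ i ∈ S, ξ i ^ 2) = M ξ := by
    intro ξ
    have hcoe : (↑T : Set (Finset (Fin d))) = {S : Finset (Fin d) | S.card ≤ k} := by
      ext S; simp [hTdef]
    have hbdd : BddAbove (Set.range fun S : {S : Finset (Fin d) | S.card ≤ k} =>
        ∑ i ∈ (S : Finset (Fin d)), ξ i ^ 2) := (Set.finite_range _).bddAbove
    have hne : ({S : Finset (Fin d) | S.card ≤ k} : Set (Finset (Fin d))).Nonempty :=
      ⟨∅, by simp⟩
    have h0 : sSup (∅ : Set ℝ) ≤ ⨆ S : {S : Finset (Fin d) | S.card ≤ k},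
        ∑ i ∈ (S : Finset (Fin d)), ξ i ^ 2 := by
      rw [Real.sSup_empty]
      have : Nonempty {S : Finset (Fin d) | S.card ≤ k} := hne.to_subtype
      refine le_trans ?_ (le_ciSup hbdd ⟨∅, by simp⟩)
      simp
    rw [← csSup_image hbdd h0]
    show sSup _ = T.sup' hT fun S => ∑ i ∈ S, ξ i ^ 2
    rw [Finset.sup'_eq_csSup_image, hcoe]
  simp_rw [hM]
  -- basic facts about M
  have hM_nonneg : ∀ ξ, 0 ≤ M ξ := by
    intro ξ
    refine le_trans (by simp) (Finset.le_sup' (f := fun S => ∑ i ∈ S, ξ i ^ 2)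
      (by simp [hTdef] : (∅ : Finset (Fin d)) ∈ T))
  have hM_meas : Measurable M := by
    have h := Finset.measurable_sup' hT
      (f := fun (S : Finset (Fin d)) (ξ : Fin d → ℝ) => ∑ i ∈ S, ξ i ^ 2)
      (fun S _ => Finset.measurable_sum _ fun i _ => (measurable_pi_apply i).pow_const 2)
    have heq : M = T.sup' hT (fun (S : Finset (Fin d)) (ξ : Fin d → ℝ) => ∑ i ∈ S, ξ i ^ 2) := by
      funext ξ
      rw [Finset.sup'_apply]
    rw [heq]; exact h
  -- the dominating function g
  set g : (Fin d → ℝ) → ℝ := fun ξ => ∑ S ∈ T, ∏ i ∈ S, Real.exp (ξ i ^ 2 / 4) with hgdef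
  have hg_int : Integrable g (stdGaussian d) :=
    integrable_finset_sum _ fun S _ => subset_integrable d S
  have hexp_le : ∀ ξ, Real.exp (M ξ / 4) ≤ g ξ := by
    intro ξ
    obtain ⟨S₀, hS₀, hEq⟩ := T.exists_mem_eq_sup' hT (fun S => ∑ i ∈ S, ξ i ^ 2)
    show Real.exp (T.sup' hT (fun S => ∑ i ∈ S, ξ i ^ 2) / 4) ≤ _
    rw [hEq, div_eq_mul_inv, Finset.sum_mul, Real.exp_sum]
    have h4 : ∀ i ∈ S₀, Real.exp (ξ i ^ 2 * 4⁻¹) = Real.exp (ξ i ^ 2 / 4) := by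
      intro i _; rw [div_eq_mul_inv]
    rw [Finset.prod_congr rfl h4]
    exact Finset.single_le_sum (f := fun S => ∏ i ∈ S, Real.exp (ξ i ^ 2 / 4))
      (fun S _ => Finset.prod_nonneg fun i _ => (Real.exp_pos _).le) hS₀
  -- integrability of exp(M/4) and M
  have hexpM_int : Integrable (fun ξ => Real.exp (M ξ / 4)) (stdGaussian d) := by
    refine hg_int.mono' ((hM_meas.div_const 4).exp).aestronglyMeasurable ?_
    refine ae_of_all _ fun ξ => ?_
    rw [Real.norm_eq_abs, abs_of_pos (Real.exp_pos _)]
    exact hexp_le ξ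
  have hM_int : Integrable M (stdGaussian d) := by
    refine (hexpM_int.const_mul 4).mono' hM_meas.aestronglyMeasurable ?_
    refine ae_of_all _ fun ξ => ?_
    rw [Real.norm_eq_abs, abs_of_nonneg (hM_nonneg ξ)]
    have h := Real.add_one_le_exp (M ξ / 4)
    nlinarith [Real.exp_pos (M ξ / 4), hM_nonneg ξ]
  -- Jensen
  have hjensen : Real.exp ((∫ ξ, M ξ ∂(stdGaussian d)) / 4)
      ≤ ∫ ξ, Real.exp (M ξ / 4) ∂(stdGaussian d) := by
    have := convexOn_exp.map_integral_le (μ := stdGaussian d) (f := fun ξ => M ξ / 4)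
      continuous_exp.continuousOn isClosed_univ (ae_of_all _ fun ξ => Set.mem_univ _)
      (hM_int.div_const 4) (by exact hexpM_int)
    rwa [integral_div] at this
  -- bound the integral of g
  set B : ℝ := (Real.exp 1 * d / k) ^ k * Real.sqrt 2 ^ k with hBdef
  have hsqrt2 : (1:ℝ) ≤ Real.sqrt 2 := by
    rw [show (1:ℝ) = Real.sqrt 1 by simp]
    exact Real.sqrt_le_sqrt (by norm_num)
  have hg_bound : ∫ ξ, g ξ ∂(stdGaussian d) ≤ B := by
    have hsplit : ∫ ξ, g ξ ∂(stdGaussian d)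
        = ∑ S ∈ T, ∫ ξ, ∏ i ∈ S, Real.exp (ξ i ^ 2 / 4) ∂(stdGaussian d) :=
      integral_finset_sum T fun S _ => subset_integrable d S
    rw [hsplit]
    have h1 : ∀ S ∈ T, ∫ ξ, ∏ i ∈ S, Real.exp (ξ i ^ 2 / 4) ∂(stdGaussian d)
        ≤ Real.sqrt 2 ^ k := by
      intro S hS
      rw [show (stdGaussian d) = Measure.pi fun _ => gaussianReal 0 1 from rfl, subset_integral]
      exact pow_le_pow_right₀ hsqrt2 (by simpa [hTdef] using (Finset.mem_filter.1 hS).2)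
    calc ∑ S ∈ T, ∫ ξ, ∏ i ∈ S, Real.exp (ξ i ^ 2 / 4) ∂(stdGaussian d)
        ≤ ∑ _S ∈ T, Real.sqrt 2 ^ k := Finset.sum_le_sum h1
      _ = (T.card : ℝ) * Real.sqrt 2 ^ k := by rw [Finset.sum_const, nsmul_eq_mul]
      _ ≤ B := by
          rw [hBdef]
          have h2 : (0:ℝ) ≤ Real.sqrt 2 ^ k := by positivity
          exact mul_le_mul_of_nonneg_right (card_bound d k hk1 hkd) h2
  have hint_le : ∫ ξ, Real.exp (M ξ / 4) ∂(stdGaussian d) ≤ B :=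
    le_trans (integral_mono hexpM_int hg_int fun ξ => hexp_le ξ) hg_bound
  -- conclude
  have hB_pos : 0 < B := by
    rw [hBdef]
    exact mul_pos (pow_pos hq_pos k) (pow_pos (Real.sqrt_pos.2 (by norm_num)) k)
  have hlog : (∫ ξ, M ξ ∂(stdGaussian d)) / 4 ≤ Real.log B := by
    rw [Real.le_log_iff_exp_le hB_pos]
    exact hjensen.trans hint_le
  have hL1 : 1 ≤ Real.log (Real.exp 1 * d / k) := by
    rw [Real.le_log_iff_exp_le hq_pos,
      show Real.exp 1 * d / k = Real.exp 1 * ((d:ℝ)/k) by ring]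
    nlinarith [Real.exp_pos 1, (one_le_div hk0).2 (by exact_mod_cast hkd : (k:ℝ) ≤ d)]
  have hlogB : Real.log B ≤ (k : ℝ) * Real.log (Real.exp 1 * d / k) + (k : ℝ) * (1/2) := by
    rw [hBdef, Real.log_mul (ne_of_gt (pow_pos hq_pos k))
      (ne_of_gt (pow_pos (Real.sqrt_pos.2 (by norm_num)) k)), Real.log_pow, Real.log_pow]
    have hhalf : Real.log (Real.sqrt 2) ≤ 1/2 := by
      rw [Real.log_sqrt (by norm_num)]
      nlinarith [Real.log_le_sub_one_of_pos (by norm_num : (0:ℝ) < 2)]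
    nlinarith [hhalf, hk0]
  nlinarith [hlog, hlogB, hL1, hk0, mul_le_mul_of_nonneg_left hL1 hk0.le]
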